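/- For every n ≥ 0, Σ_{k=0}^n (p_k(x)/k!) D^k[x^n] = L_n(x) in ℚ[x], where p_k(x) = Σ_{r=0}^k Σ_{l=0}^r binom(k,r)·binom(r,l)·((−1)^r/l!) · x^r and L_n(x) = Σ_{r=0}^n binom(n,r)·((−1)^r/r!) · x^r is the n-th standard Laguerre polynomial. -/

import Mathlib

open Polynomial Finset

noncomputable def Aq (r : ℕ) : ℚ :=
  ∑ l ∈ Finset.range (r + 1), (r.choose l : ℚ) * ((-1) ^ r / (l.factorial : ℚ))

lemma altQ (n : ℕ) :
    ∑ s ∈ Finset.range (n + 1), (-1 : ℚ) ^ s * (n.choose s : ℚ)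
      = if n = 0 then 1 else 0 := by
  have h := Int.alternating_sum_range_choose (n := n)
  have h2 : ((∑ i ∈ Finset.range (n + 1), (-1 : ℤ) ^ i * (n.choose i : ℤ) : ℤ) : ℚ)
      = (((if n = 0 then 1 else 0 : ℤ)) : ℚ) := by rw [h]
  push_cast at h2
  simpa using h2

lemma keyL (m : ℕ) :
    ∑ r ∈ Finset.range (m + 1), (m.choose r : ℚ) * Aq r
      = (-1) ^ m / (m.factorial : ℚ) := by
  have h1 : ∀ r ∈ Finset.range (m + 1), (m.choose r : ℚ) * Aq r
      = ∑ l ∈ Finset.range (r + 1),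
          (m.choose r : ℚ) * (r.choose l : ℚ) * ((-1) ^ r / (l.factorial : ℚ)) := by
    intro r _
    rw [Aq, Finset.mul_sum]
    exact Finset.sum_congr rfl fun l _ => by ring
  rw [Finset.sum_congr rfl h1]
  simp only [Finset.range_eq_Ico]
  rw [← Finset.sum_Ico_Ico_comm 0 (m + 1)
    (fun l r => (m.choose r : ℚ) * (r.choose l : ℚ) * ((-1) ^ r / (l.factorial : ℚ)))]
  have h2 : ∀ l ∈ Finset.Ico 0 (m + 1),
      (∑ r ∈ Finset.Ico l (m + 1),
        (m.choose r : ℚ) * (r.choose l : ℚ) * ((-1) ^ r / (l.factorial : ℚ)))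
      = if l = m then (-1) ^ m / (m.factorial : ℚ) else 0 := by
    intro l hl
    rw [Finset.mem_Ico] at hl
    have hlm : l ≤ m := by omega
    rw [Finset.sum_Ico_eq_sum_range]
    have h3 : ∀ s ∈ Finset.range (m + 1 - l),
        (m.choose (l + s) : ℚ) * ((l + s).choose l : ℚ) * ((-1) ^ (l + s) / (l.factorial : ℚ))
        = ((m.choose l : ℚ) * ((-1) ^ l / (l.factorial : ℚ)))
            * ((-1 : ℚ) ^ s * ((m - l).choose s : ℚ)) := by
      intro s hs
      rw [Finset.mem_range] at hs
      have hsm : l + s ≤ m := by omega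
      have hc := Nat.choose_mul (n := m) (show l ≤ l + s by omega)
      have hc' : (m.choose (l + s) : ℚ) * ((l + s).choose l : ℚ)
          = (m.choose l : ℚ) * ((m - l).choose s : ℚ) := by
        have : (l + s) - l = s := by omega
        exact_mod_cast by rw [hc, this]
      rw [hc', pow_add]
      ring
    rw [Finset.sum_congr rfl h3, ← Finset.mul_sum]
    have hrange : m + 1 - l = (m - l) + 1 := by omega
    rw [hrange, altQ (m - l)]
    by_cases hlm2 : l = m
    · subst hlm2; simp
    · have : m - l ≠ 0 := by omega
      rw [if_neg this, if_neg hlm2, mul_zero]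
  rw [Finset.sum_congr rfl h2, Finset.sum_ite_eq' (Finset.Ico 0 (m + 1)) m]
  simp

lemma qkey {n m r : ℕ} (hrm : r ≤ m) (hmn : m ≤ n) :
    (n.descFactorial (n - m + r) : ℚ) * ((n - m + r).choose r : ℚ)
      / ((n - m + r).factorial : ℚ)
      = (n.choose m : ℚ) * (m.choose r : ℚ) := by
  set k := n - m + r with hk
  have hkn : k ≤ n := by omega
  have hrk : r ≤ k := by omega
  have h1 : ((n - k).factorial : ℚ) * (n.descFactorial k : ℚ) = (n.factorial : ℚ) := by
    exact_mod_cast congrArg (fun x : ℕ => (x : ℚ)) (Nat.factorial_mul_descFactorial hkn)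
  have h2 : n - k = m - r := by omega
  have h3 : k - r = n - m := by omega
  have hd : (n.descFactorial k : ℚ) = (n.factorial : ℚ) / ((m - r).factorial : ℚ) := by
    rw [← h2, eq_div_iff (by exact_mod_cast (n - k).factorial_ne_zero), mul_comm]
    exact h1
  rw [hd, Nat.cast_choose ℚ hrk, Nat.cast_choose ℚ hmn, Nat.cast_choose ℚ hrm, h3]
  have f1 : ((m - r).factorial : ℚ) ≠ 0 := by exact_mod_cast (m - r).factorial_ne_zero
  have f2 : (k.factorial : ℚ) ≠ 0 := by exact_mod_cast k.factorial_ne_zero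
  have f3 : (r.factorial : ℚ) ≠ 0 := by exact_mod_cast r.factorial_ne_zero
  have f4 : ((n - m).factorial : ℚ) ≠ 0 := by exact_mod_cast (n - m).factorial_ne_zero
  have f5 : (m.factorial : ℚ) ≠ 0 := by exact_mod_cast m.factorial_ne_zero
  field_simp

/-- With `p k = ∑_{r=0}^k ∑_{l=0}^r C(k,r) C(r,l) ((-1)^r / l!) x^r` and
`L n = ∑_{r=0}^n C(n,r) ((-1)^r / r!) x^r` the n-th Laguerre polynomial, one has
`∑_{k=0}^n (p k / k!) D^k[x^n] = L n` in `ℚ[x]`. -/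
theorem stmt_9 (p L : ℕ → Polynomial ℚ)
    (hp : ∀ k : ℕ, p k = ∑ r ∈ Finset.range (k + 1), ∑ l ∈ Finset.range (r + 1),
      Polynomial.C ((k.choose r : ℚ) * (r.choose l : ℚ) * ((-1) ^ r / (l.factorial : ℚ)))
        * Polynomial.X ^ r)
    (hL : ∀ n : ℕ, L n = ∑ r ∈ Finset.range (n + 1),
      Polynomial.C ((n.choose r : ℚ) * ((-1) ^ r / (r.factorial : ℚ))) * Polynomial.X ^ r) :
    ∀ n : ℕ,
      ∑ k ∈ Finset.range (n + 1),
        Polynomial.C (1 / (k.factorial : ℚ)) * p k * Polynomial.derivative^[k] (Polynomial.X ^ n)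
      = L n := by
  intro n
  have hpk : ∀ k : ℕ, p k = ∑ r ∈ Finset.range (k + 1),
      Polynomial.C ((k.choose r : ℚ) * Aq r) * Polynomial.X ^ r := by
    intro k
    rw [hp k]
    refine Finset.sum_congr rfl fun r _ => ?_
    rw [← Finset.sum_mul, ← map_sum]
    congr 2
    rw [Aq, Finset.mul_sum]
    exact Finset.sum_congr rfl fun l _ => by ring
  have hstep : ∀ k ∈ Finset.range (n + 1),
      Polynomial.C (1 / (k.factorial : ℚ)) * p k
          * Polynomial.derivative^[k] ((Polynomial.X : Polynomial ℚ) ^ n)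
      = ∑ r ∈ Finset.range (k + 1),
          Polynomial.C (1 / (k.factorial : ℚ) * ((k.choose r : ℚ) * Aq r)
              * (n.descFactorial k : ℚ))
            * Polynomial.X ^ (r + (n - k)) := by
    intro k _
    rw [hpk k, Polynomial.iterate_derivative_X_pow_eq_C_mul, Finset.mul_sum, Finset.sum_mul]
    refine Finset.sum_congr rfl fun r _ => ?_
    rw [pow_add]
    simp only [map_mul]
    ring
  rw [Finset.sum_congr rfl hstep]
  have hre : (∑ k ∈ Finset.range (n + 1), ∑ r ∈ Finset.range (k + 1),
        Polynomial.C (1 / (k.factorial : ℚ) * ((k.choose r : ℚ) * Aq r)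
            * (n.descFactorial k : ℚ)) * Polynomial.X ^ (r + (n - k)))
      = ∑ m ∈ Finset.range (n + 1), ∑ r ∈ Finset.range (m + 1),
          Polynomial.C (1 / ((n - m + r).factorial : ℚ)
              * (((n - m + r).choose r : ℚ) * Aq r) * (n.descFactorial (n - m + r) : ℚ))
            * Polynomial.X ^ (r + (n - (n - m + r))) := by
    rw [Finset.sum_sigma', Finset.sum_sigma']
    refine Finset.sum_nbij' (fun x => ⟨x.2 + (n - x.1), x.2⟩)
      (fun y => ⟨n - y.1 + y.2, y.2⟩) ?_ ?_ ?_ ?_ ?_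
    · rintro ⟨k, r⟩ h
      simp only [Finset.mem_sigma, Finset.mem_range] at h ⊢
      omega
    · rintro ⟨m, r⟩ h
      simp only [Finset.mem_sigma, Finset.mem_range] at h ⊢
      omega
    · rintro ⟨k, r⟩ h
      simp only [Finset.mem_sigma, Finset.mem_range] at h
      have hk : n - (r + (n - k)) + r = k := by omega
      simp [hk]
    · rintro ⟨m, r⟩ h
      simp only [Finset.mem_sigma, Finset.mem_range] at h
      have hm : r + (n - (n - m + r)) = m := by omega
      simp [hm]
    · rintro ⟨k, r⟩ h
      simp only [Finset.mem_sigma, Finset.mem_range] at h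
      have hk : n - (r + (n - k)) + r = k := by omega
      simp only [hk]
  rw [hre, hL n]
  refine Finset.sum_congr rfl fun m hm => ?_
  rw [Finset.mem_range] at hm
  have hmn : m ≤ n := by omega
  have hterm : ∀ r ∈ Finset.range (m + 1),
      Polynomial.C (1 / ((n - m + r).factorial : ℚ)
          * (((n - m + r).choose r : ℚ) * Aq r) * (n.descFactorial (n - m + r) : ℚ))
        * Polynomial.X ^ (r + (n - (n - m + r)))
      = Polynomial.C ((n.choose m : ℚ) * ((m.choose r : ℚ) * Aq r)) * Polynomial.X ^ m := by
    intro r hr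
    rw [Finset.mem_range] at hr
    have hrm : r ≤ m := by omega
    have hexp : r + (n - (n - m + r)) = m := by omega
    have hq := qkey hrm hmn
    have hw : 1 / ((n - m + r).factorial : ℚ)
          * (((n - m + r).choose r : ℚ) * Aq r) * (n.descFactorial (n - m + r) : ℚ)
        = (n.choose m : ℚ) * ((m.choose r : ℚ) * Aq r) := by
      have h5 : 1 / ((n - m + r).factorial : ℚ)
            * (((n - m + r).choose r : ℚ) * Aq r) * (n.descFactorial (n - m + r) : ℚ)
          = ((n.descFactorial (n - m + r) : ℚ) * ((n - m + r).choose r : ℚ)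
              / ((n - m + r).factorial : ℚ)) * Aq r := by ring
      rw [h5, hq]
      ring
    rw [hexp, hw]
  rw [Finset.sum_congr rfl hterm, ← Finset.sum_mul, ← map_sum, ← Finset.mul_sum, keyL]
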